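/- Let 0 < c < 1, m₀ ∈ [0,1], and let (m_n)_{n≥0} ⊆ [0,1] and (b_n)_{n≥1} ⊆ {0,1} be sequences satisfying, for every n ≥ 0: b_{n+1} = 1 whenever m_n < 1/2, b_{n+1} = 0 whenever m_n > 1/2 (b_{n+1} arbitrary in {0,1} when m_n = 1/2), and m_{n+1} = c·b_{n+1} + (1 − c)·m_n. Then: (i) the sets {n ≥ 1 : b_n = 0} and {n ≥ 1 : b_n = 1} are both infinite; and (ii) there exists N such that |m_n − 1/2| ≤ c for all n ≥ N. -/
import Mathlib

open Set

/-- dynamics of the naive learning algorithm of Examples 1 and 2.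
`m n` is the estimated population mean action, `b (n+1) ∈ {0,1}` is the optimal
action under the current estimate (equal to `1` when `m n < 1/2`, to `0` when
`m n > 1/2`), and `m (n+1) = c·b (n+1) + (1−c)·m n`. Then both actions `0` and `1`
are played infinitely often, and eventually `|m n − 1/2| ≤ c`. -/
theorem stmt8
    (c : ℝ) (hc0 : 0 < c) (hc1 : c < 1)
    (m : ℕ → ℝ) (b : ℕ → ℝ)
    (hm : ∀ n, m n ∈ Icc (0:ℝ) 1)
    (hb01 : ∀ n ≥ 1, b n = 0 ∨ b n = 1)
    (hb1 : ∀ n, m n < 1/2 → b (n+1) = 1)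
    (hb0 : ∀ n, m n > 1/2 → b (n+1) = 0)
    (hrec : ∀ n, m (n+1) = c * b (n+1) + (1 - c) * m n) :
    {n | 1 ≤ n ∧ b n = 0}.Infinite ∧ {n | 1 ≤ n ∧ b n = 1}.Infinite ∧
      ∃ N, ∀ n ≥ N, |m n - 1/2| ≤ c := by
  have h1c : (0:ℝ) < 1 - c := by linarith
  -- Part (i): b = 0 infinitely often
  have key0 : ∀ M : ℕ, ∃ n, M < n ∧ b n = 0 := by
    intro M
    by_contra h
    push_neg at h
    have hball : ∀ n, M < n → b n = 1 := by
      intro n hn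
      rcases hb01 n (by omega) with h0 | h1
      · exact absurd h0 (h n hn)
      · exact h1
    have hiter : ∀ k, 1 - m (M + k) ≤ (1 - c) ^ k := by
      intro k
      induction k with
      | zero => simpa using (hm M).1
      | succ k ih =>
        have hb := hball (M + k + 1) (by omega)
        have hr := hrec (M + k)
        have hpow : (0:ℝ) ≤ (1 - c) ^ k := le_of_lt (pow_pos h1c k)
        have : 1 - m (M + (k + 1)) = (1 - c) * (1 - m (M + k)) := by
          rw [show M + (k + 1) = (M + k) + 1 from rfl, hr, hb]; ring
        rw [this, pow_succ']
        nlinarith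
    obtain ⟨k, hk⟩ := exists_pow_lt_of_lt_one (by norm_num : (0:ℝ) < 1/2)
      (by linarith : 1 - c < 1)
    have hmk : m (M + k) > 1/2 := by have := hiter k; linarith
    have h0 := hb0 _ hmk
    have h1 := hball (M + k + 1) (by omega)
    rw [h0] at h1; norm_num at h1
  -- Part (i): b = 1 infinitely often
  have key1 : ∀ M : ℕ, ∃ n, M < n ∧ b n = 1 := by
    intro M
    by_contra h
    push_neg at h
    have hball : ∀ n, M < n → b n = 0 := by
      intro n hn
      rcases hb01 n (by omega) with h0 | h1
      · exact h0
      · exact absurd h1 (h n hn)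
    have hiter : ∀ k, m (M + k) ≤ (1 - c) ^ k := by
      intro k
      induction k with
      | zero => simpa using (hm M).2
      | succ k ih =>
        have hb := hball (M + k + 1) (by omega)
        have hr := hrec (M + k)
        have hpow : (0:ℝ) ≤ (1 - c) ^ k := le_of_lt (pow_pos h1c k)
        have : m (M + (k + 1)) = (1 - c) * m (M + k) := by
          rw [show M + (k + 1) = (M + k) + 1 from rfl, hr, hb]; ring
        rw [this, pow_succ']
        nlinarith
    obtain ⟨k, hk⟩ := exists_pow_lt_of_lt_one (by norm_num : (0:ℝ) < 1/2)
      (by linarith : 1 - c < 1)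
    have hmk : m (M + k) < 1/2 := by have := hiter k; linarith
    have h1 := hb1 _ hmk
    have h0 := hball (M + k + 1) (by omega)
    rw [h0] at h1; norm_num at h1
  refine ⟨Set.infinite_of_forall_exists_gt fun a => ?_,
    Set.infinite_of_forall_exists_gt fun a => ?_, ?_⟩
  · obtain ⟨n, hn, hbn⟩ := key0 (a + 1)
    exact ⟨n, ⟨by omega, hbn⟩, by omega⟩
  · obtain ⟨n, hn, hbn⟩ := key1 (a + 1)
    exact ⟨n, ⟨by omega, hbn⟩, by omega⟩
  -- Part (ii)
  have step : ∀ n, |m (n + 1) - 1/2| ≤ max c (|m n - 1/2| - c/2) := by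
    intro n
    have hr := hrec n
    have hm0 := (hm n).1
    have hm1 := (hm n).2
    rcases lt_trichotomy (m n) (1/2) with hlt | heq | hgt
    · have hb := hb1 n hlt
      rw [hr, hb]
      have habs : |m n - 1/2| = 1/2 - m n := by
        rw [abs_of_nonpos (by linarith)]; ring
      rw [habs]
      rcases le_or_gt (c * 1 + (1 - c) * m n) (1/2) with hs | hs
      · rw [abs_of_nonpos (by linarith)]
        refine le_max_of_le_right ?_
        nlinarith
      · rw [abs_of_pos (by linarith)]
        refine le_max_of_le_left ?_
        nlinarith
    · rcases hb01 (n + 1) (by omega) with hb | hb <;> rw [hr, hb, heq] <;>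
        refine le_max_of_le_left ?_
      · rw [abs_of_nonpos (by nlinarith)]; nlinarith
      · rw [abs_of_nonneg (by nlinarith)]; nlinarith
    · have hb := hb0 n hgt
      rw [hr, hb]
      have habs : |m n - 1/2| = m n - 1/2 := by
        rw [abs_of_nonneg (by linarith)]
      rw [habs]
      rcases le_or_gt (1/2 : ℝ) (c * 0 + (1 - c) * m n) with hs | hs
      · rw [abs_of_nonneg (by linarith)]
        refine le_max_of_le_right ?_
        nlinarith
      · rw [abs_of_nonpos (by linarith)]
        refine le_max_of_le_left ?_
        nlinarith
  have main : ∀ n : ℕ, |m n - 1/2| ≤ max c (1/2 - n * (c/2)) := by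
    intro n
    induction n with
    | zero =>
      have hm0 := (hm 0).1
      have hm1 := (hm 0).2
      refine le_max_of_le_right ?_
      rw [abs_le]
      constructor <;> simp <;> linarith
    | succ n ih =>
      have hs := step n
      have : |m n - 1/2| - c/2 ≤ max c (1/2 - (n + 1 : ℕ) * (c/2)) := by
        rcases le_max_iff.mp ih with h | h
        · refine le_max_of_le_left ?_; linarith
        · refine le_max_of_le_right ?_
          push_cast
          push_cast at h ⊢
          linarith
      exact hs.trans (max_le (le_max_left _ _) this)
  refine ⟨⌈1/c⌉₊, fun n hn => ?_⟩
  have h1 : (1:ℝ)/c ≤ (⌈1/c⌉₊ : ℝ) := Nat.le_ceil _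
  have h2 : ((⌈1/c⌉₊ : ℕ) : ℝ) ≤ (n : ℝ) := by exact_mod_cast hn
  have hnc : (1:ℝ) ≤ (n : ℝ) * c := by
    have : (1:ℝ)/c ≤ (n : ℝ) := le_trans h1 h2
    rw [div_le_iff₀ hc0] at this
    linarith
  have := main n
  have hmax : max c (1/2 - (n:ℝ) * (c/2)) = c := by
    rw [max_eq_left]; nlinarith
  rw [hmax] at this
  exact this
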